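/- arXiv:2012.02551 — 5 statements merged into one kernel-verified Lean document; each statement's English description precedes it below -/
import Mathlib

section
/- For every m ≥ 1, the expected total number of orbits (cycles, counting fixed points as cycles of length 1) of a uniformly random permutation of {1,…,m} equals the m-th harmonic number H_m = Σ_{k=1}^m 1/k. -/
/-- The number of orbits (cycles, counting fixed points as cycles of length 1)
of a permutation of `Fin m`. -/
noncomputable def Equiv.Perm.numOrbits {m : ℕ} (σ : Equiv.Perm (Fin m)) : ℕ :=
  Nat.card (MulAction.orbitRel.Quotient (Subgroup.zpowers σ) (Fin m))

open Equiv MulAction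

noncomputable def plen {m : ℕ} (σ : Equiv.Perm (Fin m)) (x : Fin m) : ℕ :=
  Nat.card (MulAction.orbit (Subgroup.zpowers σ) x)

lemma orbit_zpowers_eq {m : ℕ} (σ : Equiv.Perm (Fin m)) (x : Fin m) :
    MulAction.orbit (Subgroup.zpowers σ) x = {y | σ.SameCycle x y} := by
  ext y
  simp only [MulAction.mem_orbit_iff, Set.mem_setOf_eq, Equiv.Perm.SameCycle]
  constructor
  · rintro ⟨⟨g, n, rfl⟩, rfl⟩
    exact ⟨n, rfl⟩
  · rintro ⟨n, rfl⟩
    exact ⟨⟨σ ^ n, n, rfl⟩, rfl⟩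

lemma plen_eq_ncard {m : ℕ} (σ : Equiv.Perm (Fin m)) (x : Fin m) :
    plen σ x = Set.ncard {y | σ.SameCycle x y} := by
  rw [plen, orbit_zpowers_eq, Nat.card_coe_set_eq]


lemma plen_pos {m : ℕ} (σ : Equiv.Perm (Fin m)) (x : Fin m) : 1 ≤ plen σ x := by
  rw [plen, Nat.card_coe_set_eq]
  exact (Set.ncard_pos (Set.toFinite _)).mpr ⟨x, MulAction.mem_orbit_self x⟩

lemma plen_le {m : ℕ} (σ : Equiv.Perm (Fin m)) (x : Fin m) : plen σ x ≤ m := by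
  rw [plen, Nat.card_coe_set_eq]
  refine le_trans (Set.ncard_le_ncard (Set.subset_univ _) (Set.toFinite _)) ?_
  simp [Set.ncard_univ]

lemma plen_fixed {m : ℕ} {σ : Equiv.Perm (Fin m)} {x : Fin m} (h : σ x = x) :
    plen σ x = 1 := by
  rw [plen_eq_ncard]
  have : {y | σ.SameCycle x y} = {x} := by
    ext y
    simp only [Set.mem_setOf_eq, Set.mem_singleton_iff]
    constructor
    · rintro ⟨n, rfl⟩
      exact (Equiv.Perm.zpow_apply_eq_self_of_apply_eq_self h n)
    · rintro rfl; exact ⟨0, rfl⟩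
  rw [this, Set.ncard_singleton]

lemma plen_conj {m : ℕ} (σ τ : Equiv.Perm (Fin m)) (x : Fin m) :
    plen (τ * σ * τ⁻¹) (τ x) = plen σ x := by
  rw [plen_eq_ncard, plen_eq_ncard]
  have hs : {y | (τ * σ * τ⁻¹).SameCycle (τ x) y} = τ '' {y | σ.SameCycle x y} := by
    ext y
    simp only [Set.mem_setOf_eq, Set.mem_image]
    constructor
    · rintro ⟨n, hn⟩
      rw [conj_zpow] at hn
      refine ⟨τ⁻¹ y, ⟨n, ?_⟩, by simp⟩
      rw [← hn]; simp [Equiv.Perm.mul_apply]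
    · rintro ⟨z, ⟨n, rfl⟩, rfl⟩
      exact ⟨n, by rw [conj_zpow]; simp [Equiv.Perm.mul_apply]⟩
  rw [hs, Set.ncard_image_of_injective _ τ.injective]


lemma numOrbits_eq_sum {m : ℕ} (σ : Equiv.Perm (Fin m)) :
    (σ.numOrbits : ℝ) = ∑ x : Fin m, 1 / (plen σ x : ℝ) := by
  classical
  set G := Subgroup.zpowers σ
  letI : Fintype (MulAction.orbitRel.Quotient G (Fin m)) := Fintype.ofFinite _
  rw [← Fintype.sum_fiberwise (fun x : Fin m => (Quotient.mk'' x : MulAction.orbitRel.Quotient G (Fin m)))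
    (fun x => 1 / (plen σ x : ℝ))]
  rw [Equiv.Perm.numOrbits, Nat.card_eq_fintype_card, Fintype.card_eq_sum_ones, Nat.cast_sum]
  refine Finset.sum_congr rfl fun ω _ => ?_
  obtain ⟨x, rfl⟩ := Quotient.exists_rep ω
  have hmemiff : ∀ y : Fin m, (Quotient.mk'' y : MulAction.orbitRel.Quotient G (Fin m)) = ⟦x⟧ ↔
      y ∈ MulAction.orbit G x := by
    intro y
    rw [show (⟦x⟧ : MulAction.orbitRel.Quotient G (Fin m)) = Quotient.mk'' x from rfl,
      Quotient.eq'']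
    exact MulAction.orbitRel_apply
  have hconst : ∀ y : {y : Fin m // (Quotient.mk'' y : MulAction.orbitRel.Quotient G (Fin m)) = ⟦x⟧},
      plen σ (y : Fin m) = plen σ x := by
    rintro ⟨y, hy⟩
    have := (hmemiff y).mp hy
    simp only [plen]
    rw [MulAction.orbit_eq_iff.mpr this]
  rw [Finset.sum_congr rfl (fun y _ => by rw [hconst y])]
  rw [Finset.sum_const, Finset.card_univ]
  have hcard : Fintype.card {y : Fin m // (Quotient.mk'' y : MulAction.orbitRel.Quotient G (Fin m)) = ⟦x⟧}
      = plen σ x := by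
    rw [plen, Nat.card_eq_fintype_card]
    exact Fintype.card_congr (Equiv.subtypeEquivRight fun y => (hmemiff y))
  rw [hcard]
  have h1 : (plen σ x : ℝ) ≠ 0 := by
    exact_mod_cast Nat.one_le_iff_ne_zero.mp (plen_pos σ x)
  push_cast
  rw [nsmul_eq_mul]
  field_simp


lemma sum_plen_point {m : ℕ} (j j' : Fin m) {M : Type*} [AddCommMonoid M] (f : ℕ → M) :
    ∑ σ : Equiv.Perm (Fin m), f (plen σ j) = ∑ σ : Equiv.Perm (Fin m), f (plen σ j') := by
  set τ : Equiv.Perm (Fin m) := Equiv.swap j' j with hτ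
  refine Fintype.sum_bijective (fun σ => τ * σ * τ⁻¹) ?_ _ _ fun σ => ?_
  · constructor
    · intro a b h
      simpa [mul_assoc] using congrArg (fun x => τ⁻¹ * x * τ) h
    · intro c; exact ⟨τ⁻¹ * c * τ, by group⟩
  · have h1 := plen_conj σ τ j
    have h2 : τ j = j' := Equiv.swap_apply_right _ _
    rw [h2] at h1
    rw [← h1]

lemma happ_decompose {n : ℕ} (e : Equiv.Perm (Fin n)) (j : Fin n) (x : Fin n) :
    (Equiv.Perm.decomposeFin.symm (j.succ, e)) x.succ
      = if e x = j then 0 else (e x).succ := by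
  rw [Equiv.Perm.decomposeFin_symm_apply_succ]
  by_cases h : e x = j
  · rw [h, Equiv.swap_apply_right, if_pos rfl]
  · rw [if_neg h, Equiv.swap_apply_of_ne_of_ne (Fin.succ_ne_zero _)
      (fun hc => h (Fin.succ_injective _ hc))]

lemma plen_decompose_succ {n : ℕ} (e : Equiv.Perm (Fin n)) (j : Fin n) :
    plen (Equiv.Perm.decomposeFin.symm (j.succ, e)) 0 = plen e j + 1 := by
  set σ : Equiv.Perm (Fin (n+1)) := Equiv.Perm.decomposeFin.symm (j.succ, e) with hσ
  have hσ0 : σ 0 = j.succ := Equiv.Perm.decomposeFin_symm_apply_zero _ _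
  have happ : ∀ x : Fin n, σ x.succ = if e x = j then 0 else (e x).succ :=
    happ_decompose e j
  set C : Set (Fin n) := {y | e.SameCycle j y} with hC
  have hCmem : ∀ z, z ∈ C ↔ e.SameCycle j z := fun z => Iff.rfl
  have hCclosed : ∀ z ∈ C, e z ∈ C := by
    intro z hz
    rw [hCmem] at hz ⊢
    exact Equiv.Perm.sameCycle_apply_right.mpr hz
  have claimA : ∀ i : ℕ, (σ ^ i) 0 = 0 ∨ ∃ z ∈ C, (σ ^ i) 0 = z.succ := by
    intro i
    induction i with
    | zero => left; rfl
    | succ i ih =>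
      rw [pow_succ', Equiv.Perm.mul_apply]
      rcases ih with h0 | ⟨z, hz, hzy⟩
      · rw [h0, hσ0]
        exact Or.inr ⟨j, ⟨0, rfl⟩, rfl⟩
      · rw [hzy, happ z]
        by_cases hez : e z = j
        · rw [if_pos hez]; left; rfl
        · rw [if_neg hez]
          exact Or.inr ⟨e z, hCclosed z hz, rfl⟩
  have claimB : ∀ i : ℕ, σ.SameCycle 0 (((e ^ i) j).succ) := by
    intro i
    induction i with
    | zero => exact ⟨1, by simpa using hσ0⟩
    | succ i ih =>
      rw [pow_succ', Equiv.Perm.mul_apply]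
      by_cases hez : e ((e ^ i) j) = j
      · rw [hez]
        exact ⟨1, by simpa using hσ0⟩
      · have hst : σ (((e ^ i) j).succ) = (e ((e ^ i) j)).succ := by
          rw [happ, if_neg hez]
        rw [← hst]
        exact Equiv.Perm.sameCycle_apply_right.mpr ih
  have hkey : {y | σ.SameCycle 0 y} = insert (0 : Fin (n+1)) (Fin.succ '' C) := by
    ext y
    simp only [Set.mem_setOf_eq, Set.mem_insert_iff, Set.mem_image]
    constructor
    · intro hy
      obtain ⟨i, _, rfl⟩ := hy.exists_pow_eq'
      rcases claimA i with h0 | ⟨z, hz, hzy⟩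
      · exact Or.inl h0
      · exact Or.inr ⟨z, hz, hzy.symm⟩
    · rintro (rfl | ⟨z, hz, rfl⟩)
      · exact Equiv.Perm.SameCycle.refl _ _
      · obtain ⟨i, _, rfl⟩ := (hCmem z).mp hz |>.exists_pow_eq'
        exact claimB i
  have h0notmem : (0 : Fin (n+1)) ∉ Fin.succ '' C := by
    rintro ⟨z, _, hz⟩
    exact Fin.succ_ne_zero z hz
  rw [plen_eq_ncard, plen_eq_ncard, hkey,
    Set.ncard_insert_of_notMem h0notmem (Set.toFinite _),
    Set.ncard_image_of_injective _ (Fin.succ_injective n)]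

lemma count_point {m : ℕ} (j j' : Fin m) (k : ℕ) :
    (Finset.univ.filter (fun σ : Equiv.Perm (Fin m) => plen σ j = k)).card
      = (Finset.univ.filter (fun σ : Equiv.Perm (Fin m) => plen σ j' = k)).card := by
  rw [Finset.card_filter, Finset.card_filter]
  exact sum_plen_point j j' (fun l => if l = k then 1 else 0)

lemma count0 (m : ℕ) (k : ℕ) :
    (Finset.univ.filter (fun σ : Equiv.Perm (Fin (m+1)) => plen σ 0 = k)).card
      = if k ∈ Finset.Icc 1 (m+1) then m.factorial else 0 := by
  induction m generalizing k with
  | zero =>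
    have hall : ∀ σ : Equiv.Perm (Fin 1), plen σ 0 = 1 := fun σ =>
      plen_fixed (Subsingleton.elim _ _)
    rw [Finset.card_filter]
    simp only [hall]
    rw [Finset.sum_const, Finset.card_univ]
    simp [Fintype.card_perm, Finset.mem_Icc, eq_comm]
  | succ m ih =>
    rw [Finset.card_filter]
    rw [← Equiv.sum_comp (Equiv.Perm.decomposeFin (n := m+1)).symm
      (fun σ => if plen σ 0 = k then 1 else 0)]
    rw [Fintype.sum_prod_type]
    rw [Fin.sum_univ_succ]
    have h0 : ∀ e : Equiv.Perm (Fin (m+1)),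
        plen (Equiv.Perm.decomposeFin.symm ((0 : Fin (m+2)), e)) 0 = 1 := fun e =>
      plen_fixed (Equiv.Perm.decomposeFin_symm_apply_zero _ _)
    have hsucc : ∀ (j : Fin (m+1)) (e : Equiv.Perm (Fin (m+1))),
        plen (Equiv.Perm.decomposeFin.symm (j.succ, e)) 0 = plen e j + 1 :=
      fun j e => plen_decompose_succ e j
    simp only [h0, hsucc]
    have hterm : ∀ j : Fin (m+1),
        (∑ e : Equiv.Perm (Fin (m+1)), if plen e j + 1 = k then 1 else 0)
          = if k ∈ Finset.Icc 2 (m+2) then m.factorial else 0 := by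
      intro j
      cases k with
      | zero => simp
      | succ k' =>
        have : (∑ e : Equiv.Perm (Fin (m+1)), if plen e j + 1 = k' + 1 then 1 else 0)
            = (Finset.univ.filter (fun e : Equiv.Perm (Fin (m+1)) => plen e j = k')).card := by
          rw [Finset.card_filter]
          refine Finset.sum_congr rfl fun e _ => by simp
        rw [this, count_point j 0 k', ih k']
        simp only [Finset.mem_Icc]
        congr 1
        · simp only [eq_iff_iff]; omega
    simp only [hterm]
    rw [Finset.sum_const, Finset.card_univ, Finset.sum_const, Finset.card_univ,
      Fintype.card_perm, Fintype.card_fin]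
    by_cases hk1 : k = 1
    · subst hk1
      rw [if_pos rfl, if_neg (by simp), if_pos (by simp [Finset.mem_Icc])]
      simp [Nat.factorial_succ, Nat.succ_mul]
    · rw [if_neg (fun h => hk1 h.symm)]
      by_cases hk2 : k ∈ Finset.Icc 2 (m+2)
      · rw [if_pos hk2, if_pos (by simp only [Finset.mem_Icc] at hk2 ⊢; omega)]
        rw [Nat.factorial_succ]
        simp [Nat.succ_mul, mul_comm]
      · rw [if_neg hk2, if_neg (by simp only [Finset.mem_Icc] at hk2 ⊢; omega)]
        simp

/-- For every `m ≥ 1`, the expected number of orbits of a uniformly random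
permutation of `{1,…,m}` equals the `m`-th harmonic number `∑_{k=1}^m 1/k`. -/
theorem expected_number_of_cycles (m : ℕ) (hm : 1 ≤ m) :
    (∑ σ : Equiv.Perm (Fin m), (Equiv.Perm.numOrbits σ : ℝ)) / (Nat.factorial m : ℝ) =
      ∑ k ∈ Finset.Icc 1 m, (1 : ℝ) / k := by
  obtain ⟨m', rfl⟩ : ∃ m', m = m' + 1 := ⟨m - 1, by omega⟩
  have key : (∑ σ : Equiv.Perm (Fin (m' + 1)), (Equiv.Perm.numOrbits σ : ℝ))
      = (m' + 1 : ℝ) * ∑ k ∈ Finset.Icc 1 (m' + 1), (m'.factorial : ℝ) * (1 / k) := by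
    calc (∑ σ : Equiv.Perm (Fin (m' + 1)), (Equiv.Perm.numOrbits σ : ℝ))
        = ∑ σ : Equiv.Perm (Fin (m' + 1)), ∑ x : Fin (m' + 1), 1 / (plen σ x : ℝ) := by
          exact Finset.sum_congr rfl fun σ _ => numOrbits_eq_sum σ
      _ = ∑ x : Fin (m' + 1), ∑ σ : Equiv.Perm (Fin (m' + 1)), 1 / (plen σ x : ℝ) :=
          Finset.sum_comm
      _ = ∑ x : Fin (m' + 1), ∑ σ : Equiv.Perm (Fin (m' + 1)), 1 / (plen σ 0 : ℝ) := by
          refine Finset.sum_congr rfl fun x _ => ?_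
          exact sum_plen_point x 0 (fun l => 1 / (l : ℝ))
      _ = (m' + 1 : ℝ) * ∑ σ : Equiv.Perm (Fin (m' + 1)), 1 / (plen σ 0 : ℝ) := by
          rw [Finset.sum_const, Finset.card_univ, Fintype.card_fin, nsmul_eq_mul]
          push_cast; ring
      _ = (m' + 1 : ℝ) * ∑ k ∈ Finset.Icc 1 (m' + 1), (m'.factorial : ℝ) * (1 / k) := by
          congr 1
          rw [← Finset.sum_fiberwise_of_maps_to
            (fun σ _ => Finset.mem_Icc.mpr ⟨plen_pos σ 0, plen_le σ 0⟩)
            (fun σ => 1 / (plen σ 0 : ℝ))]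
          refine Finset.sum_congr rfl fun k hk => ?_
          have hconst : ∀ σ ∈ Finset.univ.filter
              (fun σ : Equiv.Perm (Fin (m' + 1)) => plen σ 0 = k),
              1 / (plen σ 0 : ℝ) = 1 / (k : ℝ) := by
            intro σ hσ
            rw [(Finset.mem_filter.mp hσ).2]
          rw [Finset.sum_congr rfl hconst, Finset.sum_const, count0 m' k, if_pos hk,
            nsmul_eq_mul]
  rw [key, Nat.factorial_succ]
  push_cast
  rw [Finset.mul_sum]
  rw [Finset.sum_div]
  refine Finset.sum_congr rfl fun k hk => ?_
  have h1 : (m'.factorial : ℝ) ≠ 0 := Nat.cast_ne_zero.mpr (Nat.factorial_ne_zero m')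
  have h2 : (m' + 1 : ℝ) ≠ 0 := by positivity
  have h3 : (k : ℝ) ≠ 0 := by
    have := (Finset.mem_Icc.mp hk).1
    exact Nat.cast_ne_zero.mpr (by omega)
  field_simp
end

section
/- Neighborhood Lemma (random-sample form). Let n be even, let A and B be disjoint sets each of size n/2, and let (s_{a,t})_{a∈A, 1≤t≤⌈log n⌉} be mutually independent random variables, each uniformly distributed on B. For a nonempty A' ⊆ A write d(A') = min(√(n/|A'|), log n) and N(A') = { s_{a,t} : a ∈ A', 1 ≤ t ≤ ⌈d(A')⌉ }. Then there exist a constant c > 0 and N₀ such that for all n ≥ N₀, with probability at least 1 − c·n^{−2}, every nonempty subset A' ⊆ A satisfies |N(A')| ≥ (1/100)·|A'|·d(A'). -/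
open Finset

/-- `d(i) = min(√(n/i), log n)`. -/
noncomputable def dFun (n i : ℕ) : ℝ :=
  min (Real.sqrt ((n : ℝ) / (i : ℝ))) (Real.log n)

/-- Given an i.i.d.-uniform sample table `s : A × Fin ⌈log n⌉ → B`
(with `A = B = Fin (n/2)` as index sets of two disjoint sets of size `n/2`),
the event that every nonempty `A' ⊆ A` has
`|N(A')| ≥ (1/100)·|A'|·d(A')`, where `N(A')` consists of the values of the
first `⌈d(A')⌉` samples of each element of `A'`. -/
def GoodSample (n : ℕ) (s : Fin (n / 2) × Fin ⌈Real.log n⌉₊ → Fin (n / 2)) : Prop :=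
  ∀ A' : Finset (Fin (n / 2)), A'.Nonempty →
    (1 : ℝ) / 100 * A'.card * dFun n A'.card ≤
      ((A' ×ˢ (Finset.univ.filter fun t : Fin ⌈Real.log n⌉₊ =>
          (t : ℕ) < ⌈dFun n A'.card⌉₊)).image s).card

noncomputable def mmF (n i : ℕ) : ℕ := ⌊(i : ℝ) * dFun n i / 100⌋₊
noncomputable def kkF (n i : ℕ) : ℕ := i * ⌈dFun n i⌉₊

lemma fin_filter_card (T c : ℕ) (h : c ≤ T) :
    (Finset.univ.filter fun t : Fin T => (t : ℕ) < c).card = c := by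
  have he : (Finset.univ.filter fun t : Fin T => (t : ℕ) < c)
      = (Finset.range c).attachFin (fun m hm => (Finset.mem_range.1 hm).trans_le h) := by
    ext t; simp [Finset.mem_attachFin]
  rw [he, Finset.card_attachFin, Finset.card_range]

lemma card_restrict_le {α β : Type*} [Fintype α] [DecidableEq α] [Fintype β] [DecidableEq β]
    (D : Finset α) (S : Finset β) :
    (Finset.univ.filter fun s : α → β => ∀ x ∈ D, s x ∈ S).card
      ≤ S.card ^ D.card * (Fintype.card β) ^ (Fintype.card α - D.card) := by
  classical
  rw [← Fintype.card_coe (Finset.univ.filter fun s : α → β => ∀ x ∈ D, s x ∈ S)]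
  have hinj : Function.Injective
      (fun s : ↥(Finset.univ.filter fun s : α → β => ∀ x ∈ D, s x ∈ S) =>
        ((fun x : ↥D => (⟨s.1 x.1, (Finset.mem_filter.1 s.2).2 x.1 x.2⟩ : ↥S)),
         (fun x : ↥(Dᶜ) => s.1 x.1))) := by
    intro a b hab
    obtain ⟨h1, h2⟩ := Prod.mk.injEq .. ▸ hab
    apply Subtype.ext; funext x
    by_cases hx : x ∈ D
    · have := congrFun h1 ⟨x, hx⟩
      exact Subtype.mk.injEq .. ▸ this
    · exact congrFun h2 ⟨x, Finset.mem_compl.2 hx⟩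
  calc Fintype.card ↥(Finset.univ.filter fun s : α → β => ∀ x ∈ D, s x ∈ S)
      ≤ Fintype.card ((↥D → ↥S) × (↥(Dᶜ) → β)) := Fintype.card_le_of_injective _ hinj
    _ = S.card ^ D.card * (Fintype.card β) ^ (Fintype.card α - D.card) := by
        simp [Fintype.card_fun, Finset.card_compl]

open scoped Classical in
lemma bad_card_le (n : ℕ)
    (hmN : ∀ i, 1 ≤ i → i ≤ n / 2 → mmF n i ≤ n / 2) :
    (Finset.univ.filter
        fun s : Fin (n / 2) × Fin ⌈Real.log n⌉₊ → Fin (n / 2) => ¬ GoodSample n s).card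
      ≤ ∑ i ∈ Icc 1 (n / 2),
          (n / 2).choose i * ((n / 2).choose (mmF n i) *
            (mmF n i ^ kkF n i * (n / 2) ^ (n / 2 * ⌈Real.log n⌉₊ - kkF n i))) := by
  classical
  set N := n / 2
  set T := ⌈Real.log n⌉₊
  have hceil : ∀ j : ℕ, ⌈dFun n j⌉₊ ≤ T := fun j => Nat.ceil_le_ceil (min_le_right _ _)
  set D : Finset (Fin N) → Finset (Fin N × Fin T) := fun A' =>
    A' ×ˢ (Finset.univ.filter fun t : Fin T => (t : ℕ) < ⌈dFun n A'.card⌉₊) with hD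
  have hcover : (Finset.univ.filter
        fun s : Fin N × Fin T → Fin N => ¬ GoodSample n s)
      ⊆ (Icc 1 N).biUnion fun i => (powersetCard i (Finset.univ : Finset (Fin N))).biUnion
          fun A' => (powersetCard (mmF n i) (Finset.univ : Finset (Fin N))).biUnion
            fun S => Finset.univ.filter fun s => ∀ x ∈ D A', s x ∈ S := by
    intro s hs
    have hbad : ¬ GoodSample n s := (Finset.mem_filter.1 hs).2
    rw [GoodSample] at hbad
    push_neg at hbad
    obtain ⟨A', hA'ne, hlt⟩ := hbad
    set i := A'.card with hi
    have hi1 : 1 ≤ i := Finset.one_le_card.2 hA'ne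
    have hiN : i ≤ N := by
      calc i ≤ (Finset.univ : Finset (Fin N)).card := Finset.card_le_card (subset_univ _)
        _ = N := by simp
    have him : ((D A').image s).card ≤ mmF n i := by
      apply Nat.le_floor
      calc (((D A').image s).card : ℝ) ≤ (1 : ℝ) / 100 * A'.card * dFun n A'.card := le_of_lt hlt
        _ = (i : ℝ) * dFun n i / 100 := by rw [← hi]; ring
    obtain ⟨S, hSsub, -, hScard⟩ :=
      Finset.exists_subsuperset_card_eq (Finset.subset_univ ((D A').image s)) him
        (by simpa using hmN i hi1 hiN)
    refine Finset.mem_biUnion.2 ⟨i, Finset.mem_Icc.2 ⟨hi1, hiN⟩, ?_⟩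
    refine Finset.mem_biUnion.2 ⟨A', Finset.mem_powersetCard.2 ⟨subset_univ _, rfl⟩, ?_⟩
    refine Finset.mem_biUnion.2 ⟨S, Finset.mem_powersetCard.2 ⟨subset_univ _, hScard⟩, ?_⟩
    refine Finset.mem_filter.2 ⟨mem_univ _, fun x hx => hSsub (Finset.mem_image_of_mem s hx)⟩
  calc (Finset.univ.filter fun s : Fin N × Fin T → Fin N => ¬ GoodSample n s).card
      ≤ _ := Finset.card_le_card hcover
    _ ≤ ∑ i ∈ Icc 1 N, (((powersetCard i (Finset.univ : Finset (Fin N))).biUnion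
          fun A' => (powersetCard (mmF n i) (Finset.univ : Finset (Fin N))).biUnion
            fun S => Finset.univ.filter fun s : Fin N × Fin T → Fin N => ∀ x ∈ D A', s x ∈ S)).card :=
        Finset.card_biUnion_le
    _ ≤ ∑ i ∈ Icc 1 N, N.choose i * ((n / 2).choose (mmF n i) *
            (mmF n i ^ kkF n i * N ^ (N * T - kkF n i))) := by
        apply Finset.sum_le_sum
        intro i hi
        obtain ⟨hi1, hiN⟩ := Finset.mem_Icc.1 hi
        calc _ ≤ ∑ A' ∈ powersetCard i (Finset.univ : Finset (Fin N)),
              ((powersetCard (mmF n i) (Finset.univ : Finset (Fin N))).biUnion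
                fun S => Finset.univ.filter
                  fun s : Fin N × Fin T → Fin N => ∀ x ∈ D A', s x ∈ S).card :=
            Finset.card_biUnion_le
          _ ≤ ∑ A' ∈ powersetCard i (Finset.univ : Finset (Fin N)),
              ((n / 2).choose (mmF n i) * (mmF n i ^ kkF n i * N ^ (N * T - kkF n i))) := by
            apply Finset.sum_le_sum
            intro A' hA'
            have hA'card : A'.card = i := (Finset.mem_powersetCard.1 hA').2
            have hDcard : (D A').card = kkF n i := by
              rw [hD]
              simp only []
              rw [Finset.card_product, fin_filter_card T _ (hceil A'.card), hA'card, kkF]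
            calc _ ≤ ∑ S ∈ powersetCard (mmF n i) (Finset.univ : Finset (Fin N)),
                  (Finset.univ.filter
                    fun s : Fin N × Fin T → Fin N => ∀ x ∈ D A', s x ∈ S).card :=
                Finset.card_biUnion_le
              _ ≤ ∑ S ∈ powersetCard (mmF n i) (Finset.univ : Finset (Fin N)),
                  (mmF n i ^ kkF n i * N ^ (N * T - kkF n i)) := by
                  apply Finset.sum_le_sum
                  intro S hS
                  have hScard : S.card = mmF n i := (Finset.mem_powersetCard.1 hS).2
                  have := card_restrict_le (D A') S
                  rw [hScard, hDcard] at this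
                  simpa using this
              _ = (n / 2).choose (mmF n i) * (mmF n i ^ kkF n i * N ^ (N * T - kkF n i)) := by
                  rw [Finset.sum_const, Finset.card_powersetCard, smul_eq_mul]
                  simp [N]
          _ = N.choose i * ((n / 2).choose (mmF n i) *
                (mmF n i ^ kkF n i * N ^ (N * T - kkF n i))) := by
              rw [Finset.sum_const, Finset.card_powersetCard, smul_eq_mul]
              simp [N]

lemma choose_le_exp_bound (N j : ℕ) (hj : 1 ≤ j) :
    ((N.choose j : ℝ)) ≤ (Real.exp 1 * N / j) ^ j := by
  have hj0 : (0:ℝ) < j := by exact_mod_cast hj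
  have h1 : ((N.choose j : ℝ)) ≤ (N:ℝ) ^ j / (j.factorial : ℝ) := Nat.choose_le_pow_div j N
  have h2 : ((j:ℝ)) ^ j / (j.factorial : ℝ) ≤ Real.exp j := by
    have := Real.sum_le_exp_of_nonneg (x := (j:ℝ)) (by positivity) (j+1)
    refine le_trans ?_ this
    refine Finset.single_le_sum (f := fun i => (j:ℝ)^i / (i.factorial : ℝ)) ?_ (Finset.self_mem_range_succ j)
    intro i _; positivity
  have hfact : (0:ℝ) < (j.factorial : ℝ) := by exact_mod_cast Nat.factorial_pos j
  have key : (N:ℝ) ^ j / (j.factorial : ℝ) ≤ (Real.exp 1 * N / j) ^ j := by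
    have hexp : Real.exp j = (Real.exp 1) ^ j := by rw [Real.exp_one_pow]
    have h3 : ((j:ℝ)) ^ j ≤ (Real.exp 1) ^ j * (j.factorial : ℝ) := by
      rw [← hexp]
      calc ((j:ℝ)) ^ j = ((j:ℝ)^j / (j.factorial : ℝ)) * (j.factorial : ℝ) := by field_simp
        _ ≤ Real.exp j * (j.factorial : ℝ) := by
            exact mul_le_mul_of_nonneg_right h2 hfact.le
    have hNj : (0:ℝ) ≤ (N:ℝ) / j := by positivity
    calc (N:ℝ) ^ j / (j.factorial : ℝ) = ((N:ℝ)/j)^j * ((j:ℝ)^j / (j.factorial : ℝ)) := by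
          rw [div_pow]; field_simp
      _ ≤ ((N:ℝ)/j)^j * (Real.exp 1)^j := by
          refine mul_le_mul_of_nonneg_left ?_ (by positivity)
          rw [div_le_iff₀ hfact]
          exact h3
      _ = (Real.exp 1 * N / j) ^ j := by
          rw [← mul_pow]; congr 1; field_simp
  exact h1.trans key

lemma key_arith (i d m k lg li q l50 : ℝ)
    (hi : 1 ≤ i) (hd1 : 1 ≤ d)
    (hm0 : 0 ≤ m) (hm : m ≤ i * d / 100)
    (hk : i * d ≤ k)
    (hli0 : 0 ≤ li) (hlile : li ≤ lg) (hlg : 20 ≤ lg)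
    (hl50 : (3.69 : ℝ) ≤ l50)
    (hcase : d = lg ∨ ((lg - li) / 2 + 1 ≤ d ∧ 2 * lg ≤ i))
    (hq : q ≤ (li - lg) / 2 - l50) :
    i * (1 + lg - li) + m + (k - m) * q ≤ -3 * lg := by
  set ld : ℝ := (lg - li) / 2 with hld
  have hld0 : 0 ≤ ld := by simp [hld]; linarith
  have hq' : q ≤ -(ld + l50) := by rw [hld]; linarith
  have hid : 0 < i * d := by positivity
  have hkm : 99 / 100 * (i * d) ≤ k - m := by linarith
  have hkm0 : (0:ℝ) ≤ k - m := by nlinarith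
  have hP : (0:ℝ) ≤ ld + l50 := by linarith
  have h1 : (k - m) * q ≤ 99 / 100 * (i * d) * (-(ld + l50)) := by
    calc (k - m) * q ≤ (k - m) * (-(ld + l50)) := mul_le_mul_of_nonneg_left hq' hkm0
      _ ≤ 99 / 100 * (i * d) * (-(ld + l50)) := by
          apply mul_le_mul_of_nonpos_right hkm (by linarith)
  have main : i * (1 + 2 * ld) + i * d / 100 - 99 / 100 * (i * d) * (ld + l50) ≤ -3 * lg := by
    rcases hcase with hA | ⟨hB1, hB2⟩
    · subst hA
      have hb : 1 + 2 * ld + d / 100 - 99 / 100 * d * (ld + l50) ≤ -3.5 * d := by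
        nlinarith [mul_nonneg hld0 (by linarith : (0:ℝ) ≤ d - 20)]
      have hbneg : 1 + 2 * ld + d / 100 - 99 / 100 * d * (ld + l50) ≤ 0 := by nlinarith
      calc i * (1 + 2 * ld) + i * d / 100 - 99 / 100 * (i * d) * (ld + l50)
          = i * (1 + 2 * ld + d / 100 - 99 / 100 * d * (ld + l50)) := by ring
        _ ≤ 1 * (1 + 2 * ld + d / 100 - 99 / 100 * d * (ld + l50)) := by
            apply mul_le_mul_of_nonpos_right hi hbneg
        _ ≤ -3 * d := by nlinarith
    · have hb : 1 + 2 * ld + d / 100 - 99 / 100 * d * (ld + l50) ≤ -2.6 := by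
        nlinarith [mul_nonneg hld0 (by linarith : (0:ℝ) ≤ d - 1 - ld), sq_nonneg ld,
          mul_nonneg hld0 hld0]
      have hbneg : 1 + 2 * ld + d / 100 - 99 / 100 * d * (ld + l50) ≤ 0 := by linarith
      calc i * (1 + 2 * ld) + i * d / 100 - 99 / 100 * (i * d) * (ld + l50)
          = i * (1 + 2 * ld + d / 100 - 99 / 100 * d * (ld + l50)) := by ring
        _ ≤ (2 * lg) * (1 + 2 * ld + d / 100 - 99 / 100 * d * (ld + l50)) := by
            apply mul_le_mul_of_nonpos_right hB2 hbneg
        _ ≤ (2 * lg) * (-2.6) := by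
            apply mul_le_mul_of_nonneg_left hb (by linarith)
        _ ≤ -3 * lg := by linarith
  have h3 : i * (1 + lg - li) = i * (1 + 2 * ld) := by rw [hld]; ring
  linarith [h1, hm, main, h3]

lemma log50 : (3.69 : ℝ) ≤ Real.log 50 := by
  have h2 : (0.6931471803 : ℝ) < Real.log 2 := Real.log_two_gt_d9
  have h25 : (3 : ℝ) ≤ Real.log 25 := by
    rw [Real.le_log_iff_exp_le (by norm_num)]
    have : Real.exp 3 = Real.exp 1 ^ 3 := by
      rw [Real.exp_one_pow]; norm_num
    rw [this]
    calc Real.exp 1 ^ 3 ≤ (2.7182818286 : ℝ) ^ 3 := by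
          apply pow_le_pow_left₀ (Real.exp_pos 1).le Real.exp_one_lt_d9.le
      _ ≤ 25 := by norm_num
  have h50 : Real.log 50 = Real.log 2 + Real.log 25 := by
    rw [← Real.log_mul (by norm_num) (by norm_num)]; norm_num
  linarith

lemma term_bound (n i : ℕ)
    (hn20 : 20 ≤ Real.log n) (hn3 : 2 * Real.log n ^ 3 ≤ (n : ℝ))
    (hNr : ((n / 2 : ℕ) : ℝ) = (n : ℝ) / 2)
    (hi1 : 1 ≤ i) (hiN : i ≤ n / 2) :
    ((n / 2).choose i : ℝ) * ((n / 2).choose (mmF n i) : ℝ) *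
      ((mmF n i : ℝ) / ((n / 2 : ℕ) : ℝ)) ^ kkF n i ≤ 1 / (n : ℝ) ^ 3 := by
  have hn0 : (0 : ℝ) < n := by
    rcases Nat.eq_zero_or_pos n with h | h
    · simp [h] at hn20; linarith
    · exact_mod_cast h
  have hn1 : (1 : ℝ) ≤ n := by
    have : 0 < n := by exact_mod_cast hn0
    exact_mod_cast this
  have hi0 : (0 : ℝ) < i := by exact_mod_cast hi1
  have hin : (i : ℝ) ≤ n := by
    have : i ≤ n := le_trans hiN (Nat.div_le_self n 2)
    exact_mod_cast this
  set d := dFun n i with hd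
  have hdsqrt : d ≤ Real.sqrt ((n : ℝ) / i) := min_le_left _ _
  have hdlog : d ≤ Real.log n := min_le_right _ _
  have hd1 : 1 ≤ d := by
    apply le_min
    · rw [show (1:ℝ) = Real.sqrt 1 by simp]
      apply Real.sqrt_le_sqrt
      rw [le_div_iff₀ hi0]; linarith
    · linarith
  have hd0 : (0 : ℝ) < d := by linarith
  set N' := ((n / 2 : ℕ) : ℝ) with hN'
  have hN'pos : 0 < N' := by rw [hNr]; linarith
  set m := mmF n i with hm
  set k := kkF n i with hk
  have hmle : (m : ℝ) ≤ (i : ℝ) * d / 100 := Nat.floor_le (by positivity)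
  have hkge : (i : ℝ) * d ≤ (k : ℝ) := by
    rw [hk, kkF]
    push_cast
    exact mul_le_mul_of_nonneg_left (Nat.le_ceil d) hi0.le
  have hmk : m ≤ k := by
    have : (m : ℝ) ≤ (k : ℝ) := by nlinarith
    exact_mod_cast this
  have hk1 : 1 ≤ k := by
    rw [hk, kkF]
    exact Nat.one_le_iff_ne_zero.2 (Nat.mul_ne_zero (by omega)
      (Nat.pos_iff_ne_zero.1 (Nat.ceil_pos.2 hd0)))
  rcases Nat.eq_zero_or_pos m with hm0 | hm1
  · rw [hm0]
    simp only [Nat.cast_zero, zero_div]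
    rw [zero_pow (by omega)]
    rw [mul_zero]
    positivity
  · -- main case
    have hm0R : (0 : ℝ) < m := by exact_mod_cast hm1
    have b1 : ((n / 2).choose i : ℝ) ≤ (Real.exp 1 * N' / i) ^ i :=
      choose_le_exp_bound (n / 2) i hi1
    have b2 : ((n / 2).choose m : ℝ) ≤ (Real.exp 1 * N' / m) ^ m :=
      choose_le_exp_bound (n / 2) m hm1
    set X := (Real.exp 1 * N' / i) ^ i * Real.exp 1 ^ m * ((m : ℝ) / N') ^ (k - m) with hX
    have hsplit : ((m : ℝ) / N') ^ k = ((m : ℝ) / N') ^ m * ((m : ℝ) / N') ^ (k - m) := by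
      rw [← pow_add]; congr 1; omega
    have hcollapse : (Real.exp 1 * N' / m) * ((m : ℝ) / N') = Real.exp 1 := by
      field_simp
    have step1 : ((n / 2).choose i : ℝ) * ((n / 2).choose m : ℝ) *
        ((m : ℝ) / N') ^ k ≤ X := by
      rw [hsplit, hX]
      have e1 : ((n / 2).choose i : ℝ) * ((n / 2).choose m : ℝ) *
          (((m : ℝ) / N') ^ m * ((m : ℝ) / N') ^ (k - m))
          ≤ (Real.exp 1 * N' / i) ^ i * ((Real.exp 1 * N' / m) ^ m * ((m : ℝ) / N') ^ m)
            * ((m : ℝ) / N') ^ (k - m) := by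
        have hc1 : (0:ℝ) ≤ ((m : ℝ) / N') ^ m := by positivity
        have hc2 : (0:ℝ) ≤ ((m : ℝ) / N') ^ (k - m) := by positivity
        nlinarith [mul_le_mul b1 b2 (Nat.cast_nonneg _) (by positivity : (0:ℝ) ≤ (Real.exp 1 * N' / i) ^ i),
          mul_le_mul_of_nonneg_right
            (mul_le_mul b1 b2 (Nat.cast_nonneg _) (by positivity : (0:ℝ) ≤ (Real.exp 1 * N' / i) ^ i))
            (mul_nonneg hc1 hc2)]
      calc ((n / 2).choose i : ℝ) * ((n / 2).choose m : ℝ) *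
          (((m : ℝ) / N') ^ m * ((m : ℝ) / N') ^ (k - m)) ≤ _ := e1
        _ = (Real.exp 1 * N' / i) ^ i * Real.exp 1 ^ m * ((m : ℝ) / N') ^ (k - m) := by
            rw [← mul_pow, hcollapse]
    have hX0 : (0 : ℝ) < X := by
      rw [hX]; positivity
    -- logarithm computation
    have hlogsum : Real.log X = (i : ℝ) * Real.log (Real.exp 1 * N' / i)
        + (m : ℝ) + ((k - m : ℕ) : ℝ) * Real.log ((m : ℝ) / N') := by
      rw [hX, Real.log_mul (by positivity) (by positivity),
        Real.log_mul (by positivity) (by positivity),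
        Real.log_pow, Real.log_pow, Real.log_pow, Real.log_exp]
      ring
    have hlogfirst : Real.log (Real.exp 1 * N' / i) ≤ 1 + Real.log n - Real.log i := by
      rw [Real.log_div (by positivity) (by positivity),
        Real.log_mul (by positivity) (by positivity), Real.log_exp]
      have : Real.log N' ≤ Real.log n := by
        apply Real.log_le_log hN'pos
        rw [hNr]; linarith
      linarith
    set q := Real.log ((m : ℝ) / N') with hq
    have hqle : q ≤ (Real.log i - Real.log n) / 2 - Real.log 50 := by
      have hmN : (m : ℝ) / N' ≤ Real.sqrt ((i : ℝ) / n) / 50 := by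
        have h1 : (i : ℝ) * Real.sqrt ((n : ℝ) / i) = Real.sqrt ((i : ℝ) * n) := by
          rw [show (i : ℝ) * (n : ℝ) = (i : ℝ) ^ 2 * ((n : ℝ) / i) by field_simp,
            Real.sqrt_mul (sq_nonneg _), Real.sqrt_sq hi0.le]
        have h2 : Real.sqrt ((i : ℝ) / n) = Real.sqrt ((i : ℝ) * n) / n := by
          rw [show (i : ℝ) / (n : ℝ) = ((i : ℝ) * n) / (n : ℝ) ^ 2 by field_simp,
            Real.sqrt_div (by positivity), Real.sqrt_sq hn0.le]
        have h3 : (m : ℝ) ≤ Real.sqrt ((i : ℝ) * n) / 100 := by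
          rw [← h1]
          calc (m : ℝ) ≤ (i : ℝ) * d / 100 := hmle
            _ ≤ (i : ℝ) * Real.sqrt ((n : ℝ) / i) / 100 := by
                gcongr
        calc (m : ℝ) / N' ≤ (Real.sqrt ((i : ℝ) * n) / 100) / N' := by
              gcongr
          _ = Real.sqrt ((i : ℝ) * n) / (50 * n) := by
              rw [hNr]; field_simp; ring
          _ = Real.sqrt ((i : ℝ) / n) / 50 := by
              rw [h2]; field_simp
      calc q ≤ Real.log (Real.sqrt ((i : ℝ) / n) / 50) := by
            apply Real.log_le_log (by positivity) hmN
        _ = Real.log (Real.sqrt ((i : ℝ) / n)) - Real.log 50 := by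
            rw [Real.log_div (by positivity) (by norm_num)]
        _ = Real.log ((i : ℝ) / n) / 2 - Real.log 50 := by
            rw [Real.log_sqrt (by positivity)]
        _ = (Real.log i - Real.log n) / 2 - Real.log 50 := by
            rw [Real.log_div (by positivity) (by positivity)]
    have hcase : d = Real.log n ∨
        ((Real.log n - Real.log i) / 2 + 1 ≤ d ∧ 2 * Real.log n ≤ (i : ℝ)) := by
      rcases min_cases (Real.sqrt ((n : ℝ) / i)) (Real.log n) with ⟨heq, hle⟩ | ⟨heq, -⟩
      · right
        have hdval : d = Real.sqrt ((n : ℝ) / i) := heq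
        constructor
        · have hlogd : Real.log d = (Real.log n - Real.log i) / 2 := by
            rw [hdval, Real.log_sqrt (by positivity), Real.log_div (by positivity) (by positivity)]
          have := Real.add_one_le_exp (Real.log d)
          rw [Real.exp_log hd0] at this
          linarith
        · have hsq : (n : ℝ) / i ≤ Real.log n ^ 2 := by
            have := Real.sq_sqrt (by positivity : (0:ℝ) ≤ (n : ℝ) / i)
            calc (n : ℝ) / i = Real.sqrt ((n : ℝ) / i) ^ 2 := this.symm
              _ ≤ Real.log n ^ 2 := by
                  apply pow_le_pow_left₀ (Real.sqrt_nonneg _) (by rw [← hdval]; exact hdlog.trans_eq rfl)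
          have hin2 : (n : ℝ) ≤ (i : ℝ) * Real.log n ^ 2 := by
            rw [div_le_iff₀ hi0] at hsq; linarith
          have hlg2 : (0 : ℝ) < Real.log n ^ 2 := by positivity
          have : 2 * Real.log n * Real.log n ^ 2 ≤ (i : ℝ) * Real.log n ^ 2 := by
            calc 2 * Real.log n * Real.log n ^ 2 = 2 * Real.log n ^ 3 := by ring
              _ ≤ (n : ℝ) := hn3
              _ ≤ (i : ℝ) * Real.log n ^ 2 := hin2
          exact le_of_mul_le_mul_right this hlg2
      · left; exact heq
    have hkey := key_arith (i : ℝ) d (m : ℝ) (k : ℝ) (Real.log n) (Real.log i) q (Real.log 50)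
      (by exact_mod_cast hi1) hd1 (Nat.cast_nonneg m) hmle hkge
      (Real.log_nonneg (by exact_mod_cast hi1)) (Real.log_le_log hi0 hin) hn20 log50 hcase hqle
    have hlogX : Real.log X ≤ -3 * Real.log n := by
      rw [hlogsum]
      have hcast : ((k - m : ℕ) : ℝ) = (k : ℝ) - (m : ℝ) := Nat.cast_sub hmk
      rw [hcast]
      have h1 : (i : ℝ) * Real.log (Real.exp 1 * N' / i) ≤
          (i : ℝ) * (1 + Real.log n - Real.log i) :=
        mul_le_mul_of_nonneg_left hlogfirst hi0.le
      linarith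
    have hfinal : X ≤ 1 / (n : ℝ) ^ 3 := by
      have h1 : X = Real.exp (Real.log X) := (Real.exp_log hX0).symm
      rw [h1]
      calc Real.exp (Real.log X) ≤ Real.exp (-3 * Real.log n) := Real.exp_le_exp.2 hlogX
        _ = 1 / (n : ℝ) ^ 3 := by
            rw [show (-3 : ℝ) * Real.log n = -(3 * Real.log n) by ring, Real.exp_neg]
            rw [show (3 : ℝ) * Real.log n = ((3 : ℕ) : ℝ) * Real.log n by norm_num,
              Real.exp_nat_mul, Real.exp_log hn0]
            rw [one_div]
    exact le_trans step1 hfinal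

/-- Neighborhood lemma, random-sample form: there are `c > 0` and `N₀` such that
for all even `n ≥ N₀`, a uniformly random sample table (equivalently, mutually
independent uniform samples `s_{a,t} ∈ B`) satisfies the expansion event
`GoodSample` with probability at least `1 - c·n⁻²`. -/
theorem neighborhood_lemma_random_samples :
    ∃ c : ℝ, 0 < c ∧ ∃ N₀ : ℕ, ∀ n : ℕ, N₀ ≤ n → Even n →
      1 - c / (n : ℝ) ^ 2 ≤
        (Nat.card {s : Fin (n / 2) × Fin ⌈Real.log n⌉₊ → Fin (n / 2) // GoodSample n s} : ℝ) /
          (Fintype.card (Fin (n / 2) × Fin ⌈Real.log n⌉₊ → Fin (n / 2)) : ℝ) := by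
  classical
  refine ⟨1, one_pos, 10 ^ 10, fun n hn heven => ?_⟩
  set N := n / 2 with hNdef
  set T := ⌈Real.log n⌉₊ with hTdef
  have hn2 : 2 ≤ n := le_trans (by norm_num) hn
  have hnR : (10 ^ 10 : ℝ) ≤ (n : ℝ) := by exact_mod_cast hn
  have hn0 : (0 : ℝ) < n := by linarith
  have hn1 : (1 : ℝ) ≤ n := by linarith
  have hNr : ((N : ℕ) : ℝ) = (n : ℝ) / 2 := by
    have h := Nat.div_two_mul_two_of_even heven
    have : ((n / 2 : ℕ) : ℝ) * 2 = (n : ℝ) := by exact_mod_cast h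
    rw [hNdef]; linarith
  have hN1 : 1 ≤ N := by omega
  have hNRpos : (0 : ℝ) < ((N : ℕ) : ℝ) := by rw [hNr]; linarith
  -- log n ≥ 20
  have hn20 : (20 : ℝ) ≤ Real.log n := by
    rw [Real.le_log_iff_exp_le hn0]
    have h1 : Real.exp 20 = Real.exp 1 ^ 20 := by rw [Real.exp_one_pow]; norm_num
    calc Real.exp 20 ≤ (2.7182818286 : ℝ) ^ 20 := by
          rw [h1]; exact pow_le_pow_left₀ (Real.exp_pos 1).le Real.exp_one_lt_d9.le 20
      _ ≤ 10 ^ 10 := by norm_num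
      _ ≤ (n : ℝ) := hnR
  -- 2 (log n)^3 ≤ n
  have hn3 : 2 * Real.log n ^ 3 ≤ (n : ℝ) := by
    set u := (n : ℝ) ^ ((1 : ℝ) / 6) with hu
    have hu1 : (1 : ℝ) ≤ u := by
      rw [hu]
      have h := Real.rpow_le_rpow (by norm_num : (0:ℝ) ≤ 1) hn1 (by norm_num : (0:ℝ) ≤ (1:ℝ)/6)
      rwa [Real.one_rpow] at h
    have hu0 : (0 : ℝ) < u := by linarith
    have hlogu : Real.log u = (1 / 6) * Real.log n := Real.log_rpow hn0 _
    have hlogu2 : Real.log u ≤ u :=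
      (Real.log_le_sub_one_of_pos hu0).trans (by linarith)
    have hu3 : u ^ (3 : ℕ) = (n : ℝ) ^ ((1 : ℝ) / 2) := by
      rw [hu, ← Real.rpow_natCast ((n : ℝ) ^ ((1:ℝ)/6)) 3, ← Real.rpow_mul hn0.le]
      norm_num
    have hs2 : (n : ℝ) ^ ((1 : ℝ) / 2) * (n : ℝ) ^ ((1 : ℝ) / 2) = (n : ℝ) := by
      rw [← Real.rpow_add hn0]; norm_num
    have hs432 : (432 : ℝ) ≤ (n : ℝ) ^ ((1 : ℝ) / 2) := by
      have h1 : ((186624 : ℝ)) ^ ((1 : ℝ) / 2) = 432 := by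
        rw [show (186624 : ℝ) = (432 : ℝ) ^ (2 : ℕ) by norm_num,
          ← Real.rpow_natCast (432 : ℝ) 2, ← Real.rpow_mul (by norm_num)]
        norm_num
      rw [← h1]
      exact Real.rpow_le_rpow (by norm_num) (by linarith) (by norm_num)
    have hc1 : (Real.log u) ^ (3 : ℕ) ≤ u ^ (3 : ℕ) :=
      pow_le_pow_left₀ (Real.log_nonneg hu1) hlogu2 3
    have hrw : 2 * Real.log n ^ 3 = 432 * (Real.log u) ^ (3:ℕ) := by
      rw [hlogu]; ring
    calc 2 * Real.log n ^ 3 = 432 * (Real.log u) ^ (3:ℕ) := hrw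
      _ ≤ 432 * u ^ (3:ℕ) := by linarith
      _ = 432 * (n : ℝ) ^ ((1 : ℝ) / 2) := by rw [hu3]
      _ ≤ (n : ℝ) ^ ((1 : ℝ) / 2) * (n : ℝ) ^ ((1 : ℝ) / 2) := by
          apply mul_le_mul_of_nonneg_right hs432 (Real.rpow_nonneg hn0.le _)
      _ = (n : ℝ) := hs2
  -- mmF bound
  have hmN : ∀ i, 1 ≤ i → i ≤ N → mmF n i ≤ N := by
    intro i hi1 hiN
    have hi0 : (0 : ℝ) < i := by exact_mod_cast hi1
    have hin : (i : ℝ) ≤ n := by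
      have : i ≤ n := le_trans hiN (Nat.div_le_self n 2)
      exact_mod_cast this
    have hd : dFun n i ≤ Real.sqrt ((n : ℝ) / i) := min_le_left _ _
    have hsq : (i : ℝ) * Real.sqrt ((n : ℝ) / i) = Real.sqrt ((i : ℝ) * n) := by
      rw [show (i : ℝ) * (n : ℝ) = (i : ℝ) ^ 2 * ((n : ℝ) / i) by field_simp,
        Real.sqrt_mul (sq_nonneg _), Real.sqrt_sq hi0.le]
    have hsqle : Real.sqrt ((i : ℝ) * n) ≤ n := by
      calc Real.sqrt ((i : ℝ) * n) ≤ Real.sqrt ((n : ℝ) * n) := by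
            apply Real.sqrt_le_sqrt
            apply mul_le_mul_of_nonneg_right hin hn0.le
        _ = n := Real.sqrt_mul_self hn0.le
    have hfl : ((mmF n i : ℕ) : ℝ) ≤ ((N : ℕ) : ℝ) := by
      calc ((mmF n i : ℕ) : ℝ) ≤ (i : ℝ) * dFun n i / 100 := Nat.floor_le (by
            have h1 : (1:ℝ) ≤ dFun n i := by
              apply le_min
              · rw [show (1:ℝ) = Real.sqrt 1 by simp]
                apply Real.sqrt_le_sqrt
                rw [le_div_iff₀ hi0]; linarith
              · linarith
            positivity)
        _ ≤ (i : ℝ) * Real.sqrt ((n : ℝ) / i) / 100 := by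
            gcongr
        _ = Real.sqrt ((i : ℝ) * n) / 100 := by rw [hsq]
        _ ≤ (n : ℝ) / 100 := by linarith
        _ ≤ (n : ℝ) / 2 := by linarith
        _ = ((N : ℕ) : ℝ) := hNr.symm
    exact_mod_cast hfl
  -- total count
  set total : ℝ := ((N : ℕ) : ℝ) ^ (N * T) with htotal
  have htot0 : (0 : ℝ) < total := by positivity
  have hΩcard : (Fintype.card (Fin N × Fin T → Fin N) : ℝ) = total := by
    have hc : Fintype.card (Fin N × Fin T → Fin N) = N ^ (N * T) := by
      rw [Fintype.card_fun]; simp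
    rw [hc, htotal]; push_cast; ring
  -- the bad set bound, real version
  set badset := Finset.univ.filter
    (fun s : Fin N × Fin T → Fin N => ¬ GoodSample n s) with hbadset
  have hbadR : (badset.card : ℝ) ≤ total / (n : ℝ) ^ 2 := by
    have h1 := bad_card_le n hmN
    have h2 : ((badset.card : ℕ) : ℝ) ≤
        ((∑ i ∈ Icc 1 N, (N.choose i * ((N.choose (mmF n i)) *
          (mmF n i ^ kkF n i * N ^ (N * T - kkF n i)))) : ℕ) : ℝ) := by
      exact_mod_cast h1
    have h3 : ∀ i ∈ Icc 1 N,
        ((N.choose i * ((N.choose (mmF n i)) *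
          (mmF n i ^ kkF n i * N ^ (N * T - kkF n i))) : ℕ) : ℝ)
        ≤ total * (1 / (n : ℝ) ^ 3) := by
      intro i hi
      obtain ⟨hi1, hiN⟩ := Finset.mem_Icc.1 hi
      have hkNT : kkF n i ≤ N * T := by
        rw [kkF]
        exact Nat.mul_le_mul hiN (Nat.ceil_le_ceil (min_le_right _ _))
      have heq : ((N.choose i * ((N.choose (mmF n i)) *
          (mmF n i ^ kkF n i * N ^ (N * T - kkF n i))) : ℕ) : ℝ)
          = total * ((N.choose i : ℝ) * (N.choose (mmF n i) : ℝ) *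
            ((mmF n i : ℝ) / ((N : ℕ) : ℝ)) ^ kkF n i) := by
        push_cast
        rw [div_pow]
        have hNsplit : ((N : ℕ) : ℝ) ^ (N * T) =
            ((N : ℕ) : ℝ) ^ kkF n i * ((N : ℕ) : ℝ) ^ (N * T - kkF n i) := by
          rw [← pow_add]; congr 1; omega
        rw [htotal, hNsplit]
        field_simp
      rw [heq]
      apply mul_le_mul_of_nonneg_left _ htot0.le
      exact term_bound n i hn20 hn3 hNr hi1 hiN
    calc (badset.card : ℝ) ≤ _ := h2
      _ = ∑ i ∈ Icc 1 N, ((N.choose i * ((N.choose (mmF n i)) *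
            (mmF n i ^ kkF n i * N ^ (N * T - kkF n i))) : ℕ) : ℝ) := by push_cast; ring
      _ ≤ ∑ i ∈ Icc 1 N, total * (1 / (n : ℝ) ^ 3) := Finset.sum_le_sum h3
      _ = (N : ℝ) * (total * (1 / (n : ℝ) ^ 3)) := by
          rw [Finset.sum_const, Nat.card_Icc, nsmul_eq_mul]
          norm_num
      _ = total / (n : ℝ) ^ 2 / 2 := by
          rw [hNr]; field_simp
      _ ≤ total / (n : ℝ) ^ 2 := by
          have hpos : (0:ℝ) ≤ total / (n : ℝ) ^ 2 := by positivity
          linarith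
  -- good count
  have hgood : (Nat.card {s : Fin N × Fin T → Fin N // GoodSample n s} : ℕ)
      = (Finset.univ.filter (fun s : Fin N × Fin T → Fin N => GoodSample n s)).card := by
    rw [Nat.card_eq_fintype_card, Fintype.card_subtype]
  have hsplitcard : (Finset.univ.filter
        (fun s : Fin N × Fin T → Fin N => GoodSample n s)).card + badset.card
      = Fintype.card (Fin N × Fin T → Fin N) := by
    rw [hbadset, ← Finset.card_univ]
    exact Finset.card_filter_add_card_filter_not _
  have hgoodR : ((Nat.card {s : Fin N × Fin T → Fin N // GoodSample n s} : ℕ) : ℝ)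
      = total - (badset.card : ℝ) := by
    rw [hgood]
    have : ((Finset.univ.filter
        (fun s : Fin N × Fin T → Fin N => GoodSample n s)).card : ℝ) + (badset.card : ℝ)
        = (Fintype.card (Fin N × Fin T → Fin N) : ℝ) := by exact_mod_cast hsplitcard
    rw [hΩcard] at this
    linarith
  rw [hΩcard, hgoodR]
  rw [sub_div, div_self htot0.ne']
  have hfrac : (badset.card : ℝ) / total ≤ 1 / (n : ℝ) ^ 2 := by
    rw [div_le_div_iff₀ htot0 (by positivity)]
    calc (badset.card : ℝ) * (n:ℝ)^2 ≤ (total / (n : ℝ) ^ 2) * (n:ℝ)^2 := by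
          apply mul_le_mul_of_nonneg_right hbadR (by positivity)
      _ = 1 * total := by field_simp
  linarith
end

section
/- There exist a constant c > 0 and N₀ such that for all n ≥ N₀, Σ_{i=1}^{n} C(n,i) · C(n, ⌈i·d(i)/100⌉) · ( i·d(i)/(100n) )^{i·d(i)} ≤ c·n^{−2}, where d(i) = min(√(n/i), log n), C(a,b) denotes the binomial coefficient, and the exponentiation x^{y} is the real power with real exponent i·d(i). -/
lemma pow_self_le_exp_mul_factorial : ∀ m : ℕ, (m:ℝ)^m ≤ Real.exp 1 ^ m * m.factorial := by
  intro m
  induction m with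
  | zero => simp
  | succ m ih =>
    rcases Nat.eq_zero_or_pos m with hm | hm
    · subst hm
      norm_num
    · have hm0 : (0:ℝ) < m := by exact_mod_cast hm
      have h1 : (1 + 1/(m:ℝ)) ^ m ≤ Real.exp 1 := by
        calc (1 + 1/(m:ℝ))^m ≤ Real.exp (1/(m:ℝ)) ^ m := by
              apply pow_le_pow_left₀ (by positivity)
              linarith [Real.add_one_le_exp (1/(m:ℝ))]
          _ = Real.exp 1 := by
              rw [← Real.exp_nat_mul]
              congr 1
              field_simp
      have key : ((m:ℝ)+1)^m ≤ Real.exp 1 * (m:ℝ)^m := by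
        have he : ((m:ℝ)+1)^m = (m:ℝ)^m * (1+1/(m:ℝ))^m := by
          rw [← mul_pow]
          congr 1
          field_simp
        rw [he]
        calc (m:ℝ)^m * (1+1/(m:ℝ))^m ≤ (m:ℝ)^m * Real.exp 1 :=
              mul_le_mul_of_nonneg_left h1 (by positivity)
          _ = _ := mul_comm _ _
      have hfac : (((m+1).factorial : ℕ):ℝ) = (m.factorial : ℝ) * ((m:ℝ)+1) := by
        rw [Nat.factorial_succ]
        push_cast
        ring
      calc ((m+1 : ℕ):ℝ)^(m+1) = ((m:ℝ)+1)^m * ((m:ℝ)+1) := by push_cast; ring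
        _ ≤ (Real.exp 1 * (m:ℝ)^m) * ((m:ℝ)+1) :=
            mul_le_mul_of_nonneg_right key (by positivity)
        _ ≤ (Real.exp 1 * (Real.exp 1 ^ m * m.factorial)) * ((m:ℝ)+1) := by
            apply mul_le_mul_of_nonneg_right
              (mul_le_mul_of_nonneg_left ih (Real.exp_pos 1).le) (by positivity)
        _ = Real.exp 1 ^ (m+1) * ((m+1).factorial) := by
            rw [hfac]; ring



lemma log_choose_le {n m : ℕ} (hm : 1 ≤ m) (hmn : m ≤ n) :
    Real.log (n.choose m) ≤ m * (1 + (Real.log n - Real.log m)) := by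
  have hm0 : (0:ℝ) < m := by exact_mod_cast hm
  have hn0 : (0:ℝ) < n := lt_of_lt_of_le hm0 (by exact_mod_cast hmn)
  have h1 : (n.choose m : ℝ) ≤ (n:ℝ)^m / m.factorial := by
    have := Nat.choose_le_pow_div m n (α := ℝ)
    simpa using this
  have hfac0 : (0:ℝ) < (m.factorial : ℝ) := by exact_mod_cast m.factorial_pos
  have h2 : (n:ℝ)^m / (m.factorial:ℝ) ≤ (Real.exp 1 * n / m)^m := by
    rw [div_pow, mul_pow, div_le_div_iff₀ hfac0 (by positivity)]
    calc (n:ℝ)^m * (m:ℝ)^m ≤ (n:ℝ)^m * (Real.exp 1 ^ m * m.factorial) :=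
          mul_le_mul_of_nonneg_left (pow_self_le_exp_mul_factorial m) (by positivity)
      _ = Real.exp 1 ^ m * (n:ℝ)^m * (m.factorial:ℝ) := by ring
  have hpos : (0:ℝ) < n.choose m := by exact_mod_cast Nat.choose_pos hmn
  have h3 : Real.log (n.choose m) ≤ Real.log ((Real.exp 1 * n / m)^m) :=
    Real.log_le_log hpos (h1.trans h2)
  rw [Real.log_pow, Real.log_div (by positivity) hm0.ne', Real.log_mul (Real.exp_ne_zero 1) hn0.ne',
    Real.log_exp] at h3
  calc Real.log (n.choose m) ≤ m * (1 + Real.log n - Real.log m) := h3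
    _ = m * (1 + (Real.log n - Real.log m)) := by ring

lemma log_hundred_ge : (4.6:ℝ) ≤ Real.log 100 := by
  rw [Real.le_log_iff_exp_le (by norm_num)]
  have h5 : Real.exp (4.6) ^ (5:ℕ) = Real.exp 1 ^ (23:ℕ) := by
    rw [← Real.exp_nat_mul, ← Real.exp_nat_mul]; norm_num
  have hlt : Real.exp 1 ^ (23:ℕ) ≤ (2.7182818286:ℝ)^(23:ℕ) :=
    pow_le_pow_left₀ (Real.exp_pos 1).le Real.exp_one_lt_d9.le 23
  have hnum : (2.7182818286:ℝ)^(23:ℕ) ≤ (100:ℝ)^(5:ℕ) := by norm_num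
  refine le_of_pow_le_pow_left₀ (n := 5) (by norm_num) (by norm_num) ?_
  rw [h5]
  linarith

lemma term_le_exp {n i : ℕ} (t : ℝ) (hi1 : 1 ≤ i) (hin : i ≤ n)
    (ht1 : 1 ≤ t) (htN : t ≤ (n:ℝ)) (hn : 2 ≤ n) :
    (n.choose i : ℝ) * (n.choose ⌈t/100⌉₊ : ℝ) * (t/(100*(n:ℝ))) ^ t
      ≤ Real.exp ((i:ℝ)*(1 + (Real.log n - Real.log i))
        + (t/100+1)*(1 + (Real.log n + Real.log 100 - Real.log t))
        + t*(Real.log t - Real.log 100 - Real.log n)) := by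
  set N := (n:ℝ) with hNdef
  have hN0 : (0:ℝ) < N := by
    have : (2:ℝ) ≤ N := by rw [hNdef]; exact_mod_cast hn
    linarith
  have ht0 : (0:ℝ) < t := lt_of_lt_of_le one_pos ht1
  set k := ⌈t/100⌉₊ with hk
  have hk1 : 1 ≤ k := Nat.ceil_pos.mpr (by positivity)
  have hklow : t/100 ≤ (k:ℝ) := Nat.le_ceil _
  have hkup : (k:ℝ) ≤ t/100 + 1 := (Nat.ceil_lt_add_one (by positivity)).le
  have hkn : k ≤ n := by
    have hN2 : (2:ℝ) ≤ N := by rw [hNdef]; exact_mod_cast hn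
    have : (k:ℝ) ≤ N := by
      calc (k:ℝ) ≤ t/100+1 := hkup
        _ ≤ N/100 + 1 := by linarith
        _ ≤ N := by linarith
    rw [hNdef] at this
    exact_mod_cast this
  have hc1 : (0:ℝ) < (n.choose i : ℝ) := by exact_mod_cast Nat.choose_pos hin
  have hc2 : (0:ℝ) < (n.choose k : ℝ) := by exact_mod_cast Nat.choose_pos hkn
  have hr : (0:ℝ) < t/(100*N) := by positivity
  have hterm0 : (0:ℝ) < (n.choose i : ℝ) * (n.choose k : ℝ) * (t/(100*N)) ^ t :=
    mul_pos (mul_pos hc1 hc2) (Real.rpow_pos_of_pos hr t)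
  rw [← Real.exp_log hterm0]
  apply Real.exp_le_exp.mpr
  rw [Real.log_mul (mul_pos hc1 hc2).ne' (Real.rpow_pos_of_pos hr t).ne',
    Real.log_mul hc1.ne' hc2.ne', Real.log_rpow hr]
  have hk0 : (0:ℝ) < (k:ℝ) := by exact_mod_cast hk1
  have b1 : Real.log (n.choose i) ≤ (i:ℝ) * (1 + (Real.log n - Real.log i)) :=
    log_choose_le hi1 hin
  have hltN : Real.log t ≤ Real.log N := Real.log_le_log ht0 htN
  have hlogk : Real.log t - Real.log 100 ≤ Real.log k := by
    have h := Real.log_le_log (x := t/100) (by positivity) hklow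
    rwa [Real.log_div ht0.ne' (by norm_num)] at h
  have hL0 : (0:ℝ) ≤ Real.log 100 := Real.log_nonneg (by norm_num)
  have b2 : Real.log (n.choose k) ≤ (t/100+1) * (1 + (Real.log N + Real.log 100 - Real.log t)) := by
    have h := log_choose_le hk1 hkn
    have step1 : (k:ℝ) * (1 + (Real.log n - Real.log k))
        ≤ (k:ℝ) * (1 + (Real.log N + Real.log 100 - Real.log t)) := by
      apply mul_le_mul_of_nonneg_left _ hk0.le
      linarith
    have step2 : (k:ℝ) * (1 + (Real.log N + Real.log 100 - Real.log t))
        ≤ (t/100+1) * (1 + (Real.log N + Real.log 100 - Real.log t)) := by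
      apply mul_le_mul_of_nonneg_right hkup
      linarith
    exact h.trans (step1.trans step2)
  have b3 : Real.log (t/(100*N)) = Real.log t - Real.log 100 - Real.log N := by
    rw [Real.log_div ht0.ne' (by positivity), Real.log_mul (by norm_num) hN0.ne']
    ring
  rw [b3]
  have : t * (Real.log t - Real.log 100 - Real.log N) = t * (Real.log t - Real.log 100 - Real.log N) := rfl
  linarith [b1, b2]


lemma caseB_ineq (I B L l t y : ℝ) (hI1 : 1 ≤ I) (hl0 : 0 ≤ l)
    (hIl : I * l ≤ 0.37*t) (hL : 4.6 ≤ L) (hLB : L ≤ B) (hIt : I ≤ t)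
    (h4t : y^3 ≤ 4*t) (hyB : 100*y ≤ y^3) (hBy : B ≤ 4*y) (ht250 : 250 ≤ t) :
    I*(1 + 2*l) + (t/100+1)*(1 + (B + L - (B - l))) + t*((B - l) - L - B) ≤ -(3*B) := by
  have hcoef : (t/100 + 1 - t) * l ≤ 0 := mul_nonpos_of_nonpos_of_nonneg (by linarith) hl0
  have hLt : 4.6 * t ≤ L * t := mul_le_mul_of_nonneg_right hL (by linarith)
  nlinarith [hcoef, hLt]

lemma caseA_ineq (I B L li lb t : ℝ) (hI1 : 1 ≤ I) (hli : 0 ≤ li) (hlb : 0 ≤ lb)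
    (hA : 0 ≤ B - li) (h2lb : 2*lb ≤ B - li) (hL : 4.6 ≤ L) (hLB : L ≤ B)
    (hB30 : 30 ≤ B) (ht : t = I*B) :
    I*(1 + (B - li)) + (t/100+1)*(1 + (B + L - (li + lb))) + t*((li + lb) - L - B) ≤ -(3*B) := by
  subst ht
  have hI0 : (0:ℝ) ≤ I := by linarith
  have ht0 : (0:ℝ) < I*B := by nlinarith
  have h30t : (30:ℝ) ≤ I*B := by nlinarith
  have hcoef : (0:ℝ) ≤ (99/100)*(I*B) - 1 := by linarith
  have hsub : (0:ℝ) ≤ ((99/100)*(I*B) - 1) * ((B - li)/2 - lb) :=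
    mul_nonneg hcoef (by linarith)
  have r1 : 4.6 * (I*B) ≤ (I*B) * L := by nlinarith
  have r2 : 30 * (I * (B - li)) ≤ (I*B) * (B - li) := by
    nlinarith [mul_nonneg (mul_nonneg hI0 hA) (show (0:ℝ) ≤ B - 30 by linarith)]
  have r3 : B - li ≤ I * (B - li) := by
    nlinarith [mul_nonneg (show (0:ℝ) ≤ I - 1 by linarith) hA]
  have r4 : B ≤ I*B := by nlinarith [mul_nonneg (show (0:ℝ) ≤ I - 1 by linarith) (show (0:ℝ) ≤ B by linarith)]
  have r5 : 30 * I ≤ I*B := by nlinarith [mul_nonneg hI0 (show (0:ℝ) ≤ B - 30 by linarith)]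
  have rIA : 0 ≤ I * (B - li) := mul_nonneg hI0 hA
  nlinarith [hsub, r1, r2, r3, r4, r5, rIA]

set_option maxHeartbeats 1000000 in
/-- There are `c > 0` and `N₀` such that for all `n ≥ N₀`,
`Σ_{i=1}^n C(n,i)·C(n,⌈i·d(i)/100⌉)·(i·d(i)/(100n))^{i·d(i)} ≤ c·n⁻²`,
where the last exponentiation is a real power with real exponent `i·d(i)`. -/
theorem union_bound_sum_small :
    ∃ c : ℝ, 0 < c ∧ ∃ N₀ : ℕ, ∀ n : ℕ, N₀ ≤ n →
      ∑ i ∈ Finset.Icc 1 n,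
          (n.choose i : ℝ) * (n.choose ⌈(i : ℝ) * dFun n i / 100⌉₊ : ℝ) *
            ((i : ℝ) * dFun n i / (100 * (n : ℝ))) ^ ((i : ℝ) * dFun n i)
        ≤ c / (n : ℝ) ^ 2 := by
  refine ⟨1, one_pos, 3^30, fun n hn => ?_⟩
  have hn2 : 2 ≤ n := le_trans (by norm_num) hn
  have hN1 : (3:ℝ)^30 ≤ (n:ℝ) := by exact_mod_cast hn
  have hN0 : (0:ℝ) < (n:ℝ) := by
    have : 0 < n := by omega
    exact_mod_cast this
  have hB30 : (30:ℝ) ≤ Real.log n := by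
    have h3 : (1:ℝ) ≤ Real.log 3 := by
      rw [Real.le_log_iff_exp_le (by norm_num)]
      linarith [Real.exp_one_lt_d9]
    have h30 : ((30:ℕ):ℝ) * Real.log 3 ≤ Real.log n := by
      rw [← Real.log_pow]
      exact Real.log_le_log (by positivity) hN1
    push_cast at h30
    linarith [mul_le_mul_of_nonneg_left h3 (by norm_num : (0:ℝ) ≤ 30)]
  have hB0 : (0:ℝ) < Real.log n := by linarith
  have hL : (4.6:ℝ) ≤ Real.log 100 := log_hundred_ge
  have hLB : Real.log 100 ≤ Real.log n := by
    apply Real.log_le_log (by norm_num)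
    norm_num at hN1 ⊢
    linarith
  obtain ⟨y, hydef⟩ : ∃ y : ℝ, (n:ℝ) ^ ((4:ℝ)⁻¹) = y := ⟨_, rfl⟩
  have hy0 : (0:ℝ) < y := hydef ▸ Real.rpow_pos_of_pos hN0 _
  have hy4 : y^(4:ℕ) = (n:ℝ) := by
    rw [← hydef, ← Real.rpow_natCast ((n:ℝ) ^ _), ← Real.rpow_mul hN0.le]
    norm_num
  have hBy : Real.log n ≤ 4*y := by
    have h1 : Real.log y = (4:ℝ)⁻¹ * Real.log n := by
      rw [← hydef]; exact Real.log_rpow hN0 _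
    have h2 : Real.log y ≤ y - 1 := Real.log_le_sub_one_of_pos hy0
    linarith
  have hy10 : (10:ℝ) ≤ y := by
    by_contra hcon
    push_neg at hcon
    have h4 : y^(4:ℕ) < 10^(4:ℕ) := pow_lt_pow_left₀ hcon hy0.le (by norm_num)
    rw [hy4] at h4
    norm_num at h4 hN1
    linarith
  have hyy : (100:ℝ) ≤ y*y := by linarith [mul_le_mul hy10 hy10 (by norm_num : (0:ℝ) ≤ 10) (by linarith : (0:ℝ) ≤ y)]
  have hy3 : (1000:ℝ) ≤ y^3 := by
    have h := mul_le_mul hyy hy10 (by norm_num : (0:ℝ) ≤ 10) (by positivity : (0:ℝ) ≤ y*y)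
    nlinarith [h]
  have hyB : 100*y ≤ y^3 := by nlinarith [mul_le_mul_of_nonneg_right hyy hy0.le]
  have hterm : ∀ i ∈ Finset.Icc 1 n,
      (n.choose i : ℝ) * (n.choose ⌈(i : ℝ) * dFun n i / 100⌉₊ : ℝ) *
        ((i : ℝ) * dFun n i / (100 * (n : ℝ))) ^ ((i : ℝ) * dFun n i) ≤ 1/(n:ℝ)^3 := by
    intro i hi
    rw [Finset.mem_Icc] at hi
    obtain ⟨hi1, hin⟩ := hi
    have hI1 : (1:ℝ) ≤ (i:ℝ) := by exact_mod_cast hi1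
    have hIN : (i:ℝ) ≤ (n:ℝ) := by exact_mod_cast hin
    have hI0 : (0:ℝ) < (i:ℝ) := by linarith
    have hliB : Real.log i ≤ Real.log n := Real.log_le_log hI0 hIN
    have hli0 : 0 ≤ Real.log i := Real.log_nonneg hI1
    have hexp3 : Real.exp (-(3 * Real.log n)) = 1/(n:ℝ)^3 := by
      rw [Real.exp_neg, show (3:ℝ) * Real.log n = ((3:ℕ):ℝ) * Real.log n by norm_num,
        Real.exp_nat_mul, Real.exp_log hN0, one_div]
    have main : ∀ t : ℝ, 1 ≤ t → t ≤ (n:ℝ) →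
        ((i:ℝ)*(1 + (Real.log n - Real.log i))
        + (t/100+1)*(1 + (Real.log n + Real.log 100 - Real.log t))
        + t*(Real.log t - Real.log 100 - Real.log n) ≤ -(3 * Real.log n)) →
        (n.choose i : ℝ) * (n.choose ⌈t/100⌉₊ : ℝ) * (t/(100*(n:ℝ))) ^ t ≤ 1/(n:ℝ)^3 := by
      intro t ht1 htN hE
      calc (n.choose i : ℝ) * (n.choose ⌈t/100⌉₊ : ℝ) * (t/(100*(n:ℝ))) ^ t
          ≤ Real.exp _ := term_le_exp t hi1 hin ht1 htN hn2
        _ ≤ Real.exp (-(3 * Real.log n)) := Real.exp_le_exp.mpr hE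
        _ = 1/(n:ℝ)^3 := hexp3
    obtain ⟨d, hddef⟩ : ∃ d : ℝ, dFun n i = d := ⟨_, rfl⟩
    have hdm : min (Real.sqrt ((n:ℝ)/(i:ℝ))) (Real.log n) = d := hddef
    rw [hddef]
    obtain ⟨t, htdef⟩ : ∃ t : ℝ, (i:ℝ) * d = t := ⟨_, rfl⟩
    rw [htdef]
    rcases min_cases (Real.sqrt ((n:ℝ)/(i:ℝ))) (Real.log n) with ⟨hmin, hdle⟩ | ⟨hmin, hdlt⟩
    · -- Case B : d = √(n/i) ≤ log n
      have hd : d = Real.sqrt ((n:ℝ)/(i:ℝ)) := hdm.symm.trans hmin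
      have hNI1 : (1:ℝ) ≤ (n:ℝ)/(i:ℝ) := (one_le_div hI0).mpr hIN
      have hd1 : (1:ℝ) ≤ d := by rw [hd]; exact Real.one_le_sqrt.mpr hNI1
      have hd0 : (0:ℝ) < d := by linarith
      have hdsq : d^2 = (n:ℝ)/(i:ℝ) := by rw [hd]; exact Real.sq_sqrt (by positivity)
      have hdB : d ≤ Real.log n := by rw [hd]; exact hdle
      have ht0 : 0 < t := by rw [← htdef]; positivity
      have htd : t * d = (n:ℝ) := by
        rw [← htdef, mul_assoc, ← sq, hdsq]
        field_simp
      have ht1 : 1 ≤ t := by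
        have := mul_le_mul hI1 hd1 (by norm_num) hI0.le
        rw [← htdef]; linarith
      have htN : t ≤ (n:ℝ) := by
        have := mul_le_mul_of_nonneg_left hd1 ht0.le
        rw [mul_one] at this
        linarith [htd]
      have hIt : (i:ℝ) ≤ t := by
        have := mul_le_mul_of_nonneg_left hd1 hI0.le
        rw [mul_one] at this
        rw [← htdef]; linarith
      have hld0 : 0 ≤ Real.log d := Real.log_nonneg hd1
      have hlt : Real.log t = Real.log n - Real.log d := by
        have h := Real.log_mul ht0.ne' hd0.ne'
        rw [htd] at h
        linarith
      have h2d : Real.log n - Real.log i = 2 * Real.log d := by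
        rw [← Real.log_div hN0.ne' hI0.ne', ← hdsq, Real.log_pow]
        norm_num
      have hld37 : Real.log d ≤ 0.37 * d := by
        have h1 : Real.log (d * Real.exp (-1)) ≤ d * Real.exp (-1) - 1 :=
          Real.log_le_sub_one_of_pos (by positivity)
        rw [Real.log_mul hd0.ne' (Real.exp_ne_zero _), Real.log_exp] at h1
        have hb : d * Real.exp (-1) ≤ d * 0.37 :=
          mul_le_mul_of_nonneg_left
            (le_of_lt (lt_of_lt_of_le Real.exp_neg_one_lt_d9 (by norm_num))) hd0.le
        linarith [h1, hb]
      have hIld : (i:ℝ) * Real.log d ≤ 0.37 * t := by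
        calc (i:ℝ) * Real.log d ≤ (i:ℝ) * (0.37 * d) := mul_le_mul_of_nonneg_left hld37 hI0.le
          _ = 0.37 * t := by rw [← htdef]; ring
      have htB : (n:ℝ) ≤ t * Real.log n := by
        have := mul_le_mul_of_nonneg_left hdB ht0.le
        linarith [htd]
      have h4t : y^3 ≤ 4*t := by
        have h1 : t * Real.log n ≤ t * (4*y) := mul_le_mul_of_nonneg_left hBy ht0.le
        have h2 : y^(4:ℕ) ≤ 4*t*y := by rw [hy4]; linarith [htB, h1]
        have h3 : y^3 * y ≤ (4*t) * y := by linarith [h2]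
        exact le_of_mul_le_mul_right h3 hy0
      have ht250 : (250:ℝ) ≤ t := by linarith [h4t, hy3]
      apply main t ht1 htN
      rw [hlt, h2d]
      exact caseB_ineq (i:ℝ) (Real.log n) (Real.log 100) (Real.log d) t y
        hI1 hld0 hIld hL hLB hIt h4t hyB hBy ht250
    · -- Case A : d = log n < √(n/i)
      have hd : d = Real.log n := hdm.symm.trans hmin
      have hsq : Real.log n < Real.sqrt ((n:ℝ)/(i:ℝ)) := hdlt
      have hB2 : (Real.log n)^2 ≤ (n:ℝ)/(i:ℝ) := by
        have h := pow_le_pow_left₀ hB0.le hsq.le 2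
        rwa [Real.sq_sqrt (show (0:ℝ) ≤ (n:ℝ)/(i:ℝ) by positivity)] at h
      have hIB2 : (i:ℝ) * (Real.log n)^2 ≤ (n:ℝ) := by
        have := (le_div_iff₀ hI0).mp hB2
        linarith
      have htd : t = (i:ℝ) * Real.log n := by rw [← htdef, hd]
      have ht0 : 0 < t := by rw [htd]; positivity
      have h30t : (30:ℝ) ≤ t := by
        rw [htd]
        linarith [mul_le_mul hI1 hB30 (by norm_num : (0:ℝ) ≤ 30) hI0.le]
      have ht1 : 1 ≤ t := by linarith
      have htB : t * Real.log n ≤ (n:ℝ) := by rw [htd]; linarith [hIB2]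
      have htN : t ≤ (n:ℝ) := by
        have := mul_le_mul_of_nonneg_left (show (1:ℝ) ≤ Real.log n by linarith) ht0.le
        rw [mul_one] at this
        linarith
      have hlt : Real.log t = Real.log i + Real.log (Real.log n) := by
        rw [htd]; exact Real.log_mul hI0.ne' hB0.ne'
      have hlb0 : 0 ≤ Real.log (Real.log n) := Real.log_nonneg (by linarith)
      have h2lb : 2 * Real.log (Real.log n) ≤ Real.log n - Real.log i := by
        have h1 : Real.log ((Real.log n)^2) ≤ Real.log ((n:ℝ)/(i:ℝ)) :=
          Real.log_le_log (by positivity) hB2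
        rw [Real.log_pow, Real.log_div hN0.ne' hI0.ne'] at h1
        push_cast at h1
        linarith
      apply main t ht1 htN
      rw [hlt]
      exact caseA_ineq (i:ℝ) (Real.log n) (Real.log 100) (Real.log i) (Real.log (Real.log n)) t
        hI1 hli0 hlb0 (by linarith) h2lb hL hLB hB30 htd
  calc ∑ i ∈ Finset.Icc 1 n,
        (n.choose i : ℝ) * (n.choose ⌈(i : ℝ) * dFun n i / 100⌉₊ : ℝ) *
          ((i : ℝ) * dFun n i / (100 * (n : ℝ))) ^ ((i : ℝ) * dFun n i)
      ≤ ∑ _i ∈ Finset.Icc 1 n, 1/(n:ℝ)^3 := Finset.sum_le_sum hterm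
    _ = (n:ℝ) * (1/(n:ℝ)^3) := by
        rw [Finset.sum_const, Nat.card_Icc]
        simp [nsmul_eq_mul]
    _ = 1 / (n:ℝ)^2 := by
        field_simp
end

section
/- There exists N₀ such that for all integers n ≥ N₀ and all integers 1 ≤ i ≤ n, (1/4)·log( 100n / (i·d(i)) ) ≥ log( e·n/i ) / d(i), where d(i) = min(√(n/i), log n) and e is Euler's number. -/
lemma exp_nine_lt : Real.exp 9 < 10000 := by
  have h := Real.exp_one_lt_d9
  have h9 : Real.exp 9 = Real.exp 1 ^ 9 := by
    rw [← Real.exp_nat_mul]; norm_num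
  have hp : Real.exp 1 ^ 9 < 2.7182818286 ^ 9 := by
    exact pow_lt_pow_left₀ h (Real.exp_pos 1).le (by norm_num)
  rw [h9]
  calc Real.exp 1 ^ 9 < 2.7182818286 ^ 9 := hp
    _ < 10000 := by norm_num

lemma log_hundred : (4.5 : ℝ) ≤ Real.log 100 := by
  rw [Real.le_log_iff_exp_le (by norm_num)]
  have hsq : Real.exp 4.5 ^ 2 = Real.exp 9 := by
    rw [← Real.exp_nat_mul]; norm_num
  nlinarith [Real.exp_pos 4.5, exp_nine_lt]

lemma log_big {n : ℕ} (hn : 10000 ≤ n) : (8 : ℝ) ≤ Real.log n := by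
  rw [Real.le_log_iff_exp_le (by positivity)]
  have h9 : Real.exp 8 = Real.exp 1 ^ 8 := by
    rw [← Real.exp_nat_mul]; norm_num
  have hp : Real.exp 1 ^ 8 < 2.7182818286 ^ 8 :=
    pow_lt_pow_left₀ Real.exp_one_lt_d9 (Real.exp_pos 1).le (by norm_num)
  have : (10000 : ℝ) ≤ n := by exact_mod_cast hn
  have : Real.exp 8 < (n:ℝ) := by
    calc Real.exp 8 = Real.exp 1 ^ 8 := h9
      _ < 2.7182818286 ^ 8 := hp
      _ ≤ 10000 := by norm_num
      _ ≤ n := this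
  linarith

/-- key scalar inequality: for t ≥ 1, (1 + 2 log t)/t ≤ (4.5 + log t)/4 -/
lemma key_ineq {t : ℝ} (ht : 1 ≤ t) :
    (1 + 2 * Real.log t) / t ≤ (4.5 + Real.log t) / 4 := by
  set s := Real.log t with hs
  have hs0 : 0 ≤ s := Real.log_nonneg ht
  have htpos : (0 : ℝ) < t := by linarith
  have hts : t = Real.exp s := (Real.exp_log htpos).symm
  rw [div_le_div_iff₀ htpos (by norm_num)]
  -- goal : (1 + 2*s) * 4 ≤ (4.5 + s) * t
  rcases le_or_gt s 1 with hle | hgt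
  · have hq : 1 + s + s ^ 2 / 2 ≤ t := by rw [hts]; exact Real.quadratic_le_exp_of_nonneg hs0
    nlinarith [sq_nonneg (s - 5/13), mul_nonneg (mul_nonneg hs0 hs0) hs0]
  · -- s ≥ 1 : t = exp s ≥ e * s and e ≥ 2.71
    have he : (2.7182818283 : ℝ) < Real.exp 1 := Real.exp_one_gt_d9
    have h1 : Real.exp 1 * s ≤ t := by
      rw [hts]
      have : Real.exp s = Real.exp 1 * Real.exp (s - 1) := by
        rw [← Real.exp_add]; ring_nf
      rw [this]
      have := Real.add_one_le_exp (s - 1)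
      nlinarith [Real.exp_pos 1]
    nlinarith [mul_nonneg (le_of_lt (lt_trans (by norm_num) hgt)) htpos.le]

/-- For all sufficiently large `n` and all `1 ≤ i ≤ n`,
`(1/4)·log(100n/(i·d(i))) ≥ log(e·n/i)/d(i)`. -/
theorem quarter_log_ge :
    ∃ N₀ : ℕ, ∀ n : ℕ, N₀ ≤ n → ∀ i : ℕ, 1 ≤ i → i ≤ n →
      Real.log (Real.exp 1 * (n : ℝ) / (i : ℝ)) / dFun n i ≤
        (1 / 4) * Real.log (100 * (n : ℝ) / ((i : ℝ) * dFun n i)) := by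
  refine ⟨10000, fun n hn i hi1 hin => ?_⟩
  have hipos : (0 : ℝ) < i := by exact_mod_cast hi1
  have hi1' : (1 : ℝ) ≤ i := by exact_mod_cast hi1
  have hnpos : (0 : ℝ) < n := by positivity
  set x : ℝ := (n : ℝ) / i with hxdef
  have hx1 : (1 : ℝ) ≤ x := by
    rw [le_div_iff₀ hipos]; simpa using (by exact_mod_cast hin : (i : ℝ) ≤ n)
  have hxpos : (0 : ℝ) < x := by linarith
  have hxn : x ≤ n := by
    rw [div_le_iff₀ hipos]; nlinarith
  have hlogn : (8 : ℝ) ≤ Real.log n := log_big hn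
  have hsx1 : (1 : ℝ) ≤ Real.sqrt x := by
    rw [show (1:ℝ) = Real.sqrt 1 by simp]; exact Real.sqrt_le_sqrt hx1
  set d : ℝ := dFun n i with hddef
  have hd1 : (1 : ℝ) ≤ d := le_min hsx1 (by linarith)
  have hdpos : (0 : ℝ) < d := by linarith
  -- rewrite LHS
  have hL : Real.log (Real.exp 1 * (n : ℝ) / (i : ℝ)) = 1 + Real.log x := by
    rw [mul_div_assoc, Real.log_mul (Real.exp_ne_zero 1) (ne_of_gt hxpos), Real.log_exp]
  -- rewrite RHS argument
  have hR : 100 * (n : ℝ) / ((i : ℝ) * d) = 100 * x / d := by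
    field_simp [hxdef]
    rw [hxdef]; field_simp
  rw [hL, hR]
  have hdsq : d ≤ Real.sqrt x := min_le_left _ _
  have hsx_le_x : Real.sqrt x ≤ x := by
    nlinarith [Real.sq_sqrt hxpos.le, Real.sqrt_nonneg x]
  rcases min_cases (Real.sqrt x) (Real.log n) with ⟨hmin, hcase⟩ | ⟨hmin, hcase⟩
  · -- d = sqrt x ≤ log n
    have hd : d = Real.sqrt x := hmin
    set t := Real.sqrt x with htdef
    have ht1 : 1 ≤ t := hsx1
    have htpos : 0 < t := by linarith
    have hx_t : x = t ^ 2 := (Real.sq_sqrt hxpos.le).symm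
    have hlogx : Real.log x = 2 * Real.log t := by
      rw [hx_t, Real.log_pow]; push_cast; ring
    have harg : 100 * x / d = 100 * t := by
      rw [hd, hx_t]; field_simp
    rw [harg, hd, hlogx]
    have hlog100t : Real.log (100 * t) = Real.log 100 + Real.log t :=
      Real.log_mul (by norm_num) (ne_of_gt htpos)
    rw [hlog100t]
    have hk := key_ineq ht1
    have h45 := log_hundred
    have hlt : 0 ≤ Real.log t := Real.log_nonneg ht1
    calc (1 + 2 * Real.log t) / t ≤ (4.5 + Real.log t) / 4 := hk
      _ ≤ 1 / 4 * (Real.log 100 + Real.log t) := by linarith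
  · -- d = log n, log n ≤ sqrt x
    have hd : d = Real.log n := hmin
    have hlogx_le : Real.log x ≤ Real.log n := Real.log_le_log hxpos hxn
    have hLb : (1 + Real.log x) / d ≤ 9 / 8 := by
      rw [hd, div_le_iff₀ (by linarith : (0:ℝ) < Real.log n)]
      nlinarith
    have hdx : d ≤ x := le_trans hdsq hsx_le_x
    have hargge : (100 : ℝ) ≤ 100 * x / d := by
      rw [le_div_iff₀ hdpos]; nlinarith
    have hRb : (9 : ℝ) / 8 ≤ 1 / 4 * Real.log (100 * x / d) := by
      have := Real.log_le_log (by norm_num : (0:ℝ) < 100) hargge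
      have h45 := log_hundred
      linarith
    linarith
end

section
/- Pósa rotation. Let G be a simple graph and let v₁, v₂, …, v_s be a path in G (the vertices v₁,…,v_s are pairwise distinct and v_t is adjacent to v_{t+1} for every 1 ≤ t < s). Suppose there are indices i and j with 1 ≤ i, i+1 < j ≤ s such that v_i is adjacent to v_j and v_{i+1} is adjacent to v_s. Then the sequence v₁, …, v_i, v_j, v_{j+1}, …, v_s, v_{i+1}, v_{i+2}, …, v_{j−1} is again a path in G, and it has the same vertex set {v₁,…,v_s} as the original path. -/
/-- The Pósa rotation of the path `v₁,…,v_s` using the indices `i < j`: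
the sequence `v₁,…,v_i, v_j, v_{j+1},…,v_s, v_{i+1}, v_{i+2},…,v_{j−1}`
(given here as a function on positions `1,…,s`). -/
def posaRotate {V : Type*} (v : ℕ → V) (s i j : ℕ) : ℕ → V := fun t =>
  if t ≤ i then v t
  else if t ≤ i + (s - j) + 1 then v (j + (t - i) - 1)
  else v (t - (s - j) - 1)

/-- The index permutation underlying `posaRotate`. -/
def posaSigma (s i j t : ℕ) : ℕ :=
  if t ≤ i then t
  else if t ≤ i + (s - j) + 1 then j + (t - i) - 1
  else t - (s - j) - 1

lemma posaRotate_eq {V : Type*} (v : ℕ → V) (s i j t : ℕ) :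
    posaRotate v s i j t = v (posaSigma s i j t) := by
  unfold posaRotate posaSigma
  split_ifs <;> rfl

lemma posaSigma_mem (s i j : ℕ) (hi : 1 ≤ i) (hij : i + 1 < j) (hjs : j ≤ s)
    {t : ℕ} (h1 : 1 ≤ t) (h2 : t ≤ s) : 1 ≤ posaSigma s i j t ∧ posaSigma s i j t ≤ s := by
  unfold posaSigma
  split_ifs <;> omega

lemma posaSigma_inj (s i j : ℕ) (hi : 1 ≤ i) (hij : i + 1 < j) (hjs : j ≤ s)
    {t u : ℕ} (ht1 : 1 ≤ t) (ht2 : t ≤ s) (hu1 : 1 ≤ u) (hu2 : u ≤ s)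
    (h : posaSigma s i j t = posaSigma s i j u) : t = u := by
  unfold posaSigma at h
  split_ifs at h <;> omega

lemma posaSigma_surj (s i j : ℕ) (hi : 1 ≤ i) (hij : i + 1 < j) (hjs : j ≤ s)
    {u : ℕ} (hu1 : 1 ≤ u) (hu2 : u ≤ s) :
    ∃ t, 1 ≤ t ∧ t ≤ s ∧ posaSigma s i j t = u := by
  by_cases h1 : u ≤ i
  · exact ⟨u, hu1, hu2, by unfold posaSigma; split_ifs <;> omega⟩
  by_cases h2 : u < j
  · exact ⟨u + (s - j) + 1, by omega, by omega, by unfold posaSigma; split_ifs <;> omega⟩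
  · exact ⟨u - j + i + 1, by omega, by omega, by unfold posaSigma; split_ifs <;> omega⟩

lemma posaSigma_step (s i j : ℕ) (hi : 1 ≤ i) (hij : i + 1 < j) (hjs : j ≤ s)
    {t : ℕ} (h1 : 1 ≤ t) (h2 : t < s) :
    (posaSigma s i j (t + 1) = posaSigma s i j t + 1 ∧ 1 ≤ posaSigma s i j t ∧
      posaSigma s i j t < s) ∨
    (posaSigma s i j t = i ∧ posaSigma s i j (t + 1) = j) ∨
    (posaSigma s i j t = s ∧ posaSigma s i j (t + 1) = i + 1) := by
  unfold posaSigma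
  split_ifs <;> omega

/-- Pósa rotation: if `v₁,…,v_s` is a path in a simple graph `G`, `1 ≤ i`,
`i+1 < j ≤ s`, `v_i` is adjacent to `v_j` and `v_{i+1}` is adjacent to `v_s`,
then `v₁,…,v_i, v_j, v_{j+1},…,v_s, v_{i+1},…,v_{j−1}` is again a path in `G`
with the same vertex set. -/
theorem posa_rotation {V : Type*} (G : SimpleGraph V) (v : ℕ → V) (s i j : ℕ)
    (hinj : ∀ t u, 1 ≤ t → t ≤ s → 1 ≤ u → u ≤ s → v t = v u → t = u)
    (hadj : ∀ t, 1 ≤ t → t < s → G.Adj (v t) (v (t + 1)))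
    (hi : 1 ≤ i) (hij : i + 1 < j) (hjs : j ≤ s)
    (hij_adj : G.Adj (v i) (v j)) (hi1s_adj : G.Adj (v (i + 1)) (v s)) :
    (∀ t, 1 ≤ t → t < s →
        G.Adj (posaRotate v s i j t) (posaRotate v s i j (t + 1))) ∧
    (∀ t u, 1 ≤ t → t ≤ s → 1 ≤ u → u ≤ s →
        posaRotate v s i j t = posaRotate v s i j u → t = u) ∧
    posaRotate v s i j '' Set.Icc 1 s = v '' Set.Icc 1 s := by
  refine ⟨?_, ?_, ?_⟩
  · intro t h1 h2
    rw [posaRotate_eq, posaRotate_eq]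
    rcases posaSigma_step s i j hi hij hjs h1 h2 with ⟨h, ha, hb⟩ | ⟨ha, hb⟩ | ⟨ha, hb⟩
    · rw [h]; exact hadj _ ha hb
    · rw [ha, hb]; exact hij_adj
    · rw [ha, hb]; exact hi1s_adj.symm
  · intro t u ht1 ht2 hu1 hu2 h
    rw [posaRotate_eq, posaRotate_eq] at h
    obtain ⟨a1, a2⟩ := posaSigma_mem s i j hi hij hjs ht1 ht2
    obtain ⟨b1, b2⟩ := posaSigma_mem s i j hi hij hjs hu1 hu2
    exact posaSigma_inj s i j hi hij hjs ht1 ht2 hu1 hu2 (hinj _ _ a1 a2 b1 b2 h)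
  · ext x
    simp only [Set.mem_image, Set.mem_Icc]
    constructor
    · rintro ⟨t, ⟨ht1, ht2⟩, rfl⟩
      obtain ⟨a1, a2⟩ := posaSigma_mem s i j hi hij hjs ht1 ht2
      exact ⟨posaSigma s i j t, ⟨a1, a2⟩, (posaRotate_eq v s i j t).symm⟩
    · rintro ⟨u, ⟨hu1, hu2⟩, rfl⟩
      obtain ⟨t, ht1, ht2, ht3⟩ := posaSigma_surj s i j hi hij hjs hu1 hu2
      exact ⟨t, ⟨ht1, ht2⟩, by rw [posaRotate_eq, ht3]⟩
end
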